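/- Let λ : TG → GT be an entwining from a monad T = (T, m, e) to a comonad G = (G, δ, ε) on a category A, Ĝ the lifting of G to A_T, and K' : A → (A_T)^{Ĝ} a functor with U^{Ĝ} ∘ K' = φ_T, with corresponding right Ĝ-comodule structure on U_T whose component at (a, h_a) ∈ A_T is a morphism α_{(a,h_a)} : a → G(a). Then K' is an equivalence of categories if and only if (1) for every (a, h_a) ∈ A_T the composite G(h_a) ∘ λ_a ∘ T(α_{(a,h_a)}) : T(a) → G(a) is an isomorphism, and (2) the free functor φ_T : A → A_T is comonadic. -/

import Mathlib

open CategoryTheory CategoryTheory.Limits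

namespace Paper


variable {A : Type*} [Category A]

/-- An entwining (mixed distributive law) `λ : TG ⟶ GT` from a monad `T` to a comonad `G`. -/
structure Entwining (T : Monad A) (G : Comonad A) where
  lam : (G : A ⥤ A) ⋙ (T : A ⥤ A) ⟶ (T : A ⥤ A) ⋙ (G : A ⥤ A)
  comp_mul : ∀ a : A, T.μ.app ((G : A ⥤ A).obj a) ≫ lam.app a =
      (T : A ⥤ A).map (lam.app a) ≫ lam.app ((T : A ⥤ A).obj a) ≫
        (G : A ⥤ A).map (T.μ.app a)
  comp_unit : ∀ a : A, T.η.app ((G : A ⥤ A).obj a) ≫ lam.app a = (G : A ⥤ A).map (T.η.app a)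
  delta_comp : ∀ a : A, lam.app a ≫ G.δ.app ((T : A ⥤ A).obj a) =
      (T : A ⥤ A).map (G.δ.app a) ≫ lam.app ((G : A ⥤ A).obj a) ≫
        (G : A ⥤ A).map (lam.app a)
  eps_comp : ∀ a : A, lam.app a ≫ G.ε.app ((T : A ⥤ A).obj a) = (T : A ⥤ A).map (G.ε.app a)

namespace Entwining

variable {T : Monad A} {G : Comonad A} (E : Entwining T G)

lemma lam_natural {a b : A} (f : a ⟶ b) :
    (T : A ⥤ A).map ((G : A ⥤ A).map f) ≫ E.lam.app b =
      E.lam.app a ≫ (G : A ⥤ A).map ((T : A ⥤ A).map f) :=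
  E.lam.naturality f

/-- The value of the lifted comonad `Ĝ` on an object of `A_T`:
`Ĝ(a, h) = (G(a), G(h) ∘ λ_a)`. -/
@[simps]
def liftAlgebra (X : T.Algebra) : T.Algebra where
  A := (G : A ⥤ A).obj X.A
  a := E.lam.app X.A ≫ (G : A ⥤ A).map X.a
  unit := by
    rw [← Category.assoc, E.comp_unit, ← Functor.map_comp, X.unit]
    simp
  assoc := by
    calc T.μ.app ((G : A ⥤ A).obj X.A) ≫ E.lam.app X.A ≫ (G : A ⥤ A).map X.a
        = (T.μ.app ((G : A ⥤ A).obj X.A) ≫ E.lam.app X.A) ≫ (G : A ⥤ A).map X.a := by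
          rw [Category.assoc]
      _ = (T : A ⥤ A).map (E.lam.app X.A) ≫ E.lam.app ((T : A ⥤ A).obj X.A) ≫
            (G : A ⥤ A).map (T.μ.app X.A) ≫ (G : A ⥤ A).map X.a := by
          rw [E.comp_mul]; simp [Category.assoc]
      _ = (T : A ⥤ A).map (E.lam.app X.A) ≫ E.lam.app ((T : A ⥤ A).obj X.A) ≫
            (G : A ⥤ A).map ((T : A ⥤ A).map X.a) ≫ (G : A ⥤ A).map X.a := by
          rw [← Functor.map_comp, X.assoc, Functor.map_comp]
      _ = (T : A ⥤ A).map (E.lam.app X.A) ≫ (T : A ⥤ A).map ((G : A ⥤ A).map X.a) ≫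
            E.lam.app X.A ≫ (G : A ⥤ A).map X.a := by
          rw [← Category.assoc (E.lam.app ((T : A ⥤ A).obj X.A)), ← E.lam_natural X.a]
          simp [Category.assoc]
      _ = (T : A ⥤ A).map (E.lam.app X.A ≫ (G : A ⥤ A).map X.a) ≫
            E.lam.app X.A ≫ (G : A ⥤ A).map X.a := by
          rw [Functor.map_comp, Category.assoc]

/-- The lifting `Ĝ` of the comonad `G` to the Eilenberg–Moore category `A_T`
along the entwining `λ`. -/
@[simps]
def liftedComonad : Comonad (T.Algebra) where
  obj X := E.liftAlgebra X
  map {X Y} f :=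
    { f := (G : A ⥤ A).map f.f
      h := by
        try dsimp
        calc (T : A ⥤ A).map ((G : A ⥤ A).map f.f) ≫ E.lam.app Y.A ≫ (G : A ⥤ A).map Y.a
            = (E.lam.app X.A ≫ (G : A ⥤ A).map ((T : A ⥤ A).map f.f)) ≫
                (G : A ⥤ A).map Y.a := by
              rw [← Category.assoc, E.lam_natural f.f]
          _ = E.lam.app X.A ≫ (G : A ⥤ A).map ((T : A ⥤ A).map f.f ≫ Y.a) := by
              rw [Category.assoc, ← Functor.map_comp]
          _ = E.lam.app X.A ≫ (G : A ⥤ A).map (X.a ≫ f.f) := by rw [f.h]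
          _ = (E.lam.app X.A ≫ (G : A ⥤ A).map X.a) ≫ (G : A ⥤ A).map f.f := by
              rw [Functor.map_comp, Category.assoc] }
  map_id X := by ext; exact (G : A ⥤ A).map_id X.A
  map_comp f g := by ext; exact (G : A ⥤ A).map_comp f.f g.f
  ε :=
    { app := fun X =>
        { f := G.ε.app X.A
          h := by
            dsimp
            have hnat : (G : A ⥤ A).map X.a ≫ G.ε.app X.A =
                G.ε.app ((T : A ⥤ A).obj X.A) ≫ X.a := by
              simpa using (G.ε.naturality X.a).symm
            show (T : A ⥤ A).map (G.ε.app X.A) ≫ X.a =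
              (E.lam.app X.A ≫ (G : A ⥤ A).map X.a) ≫ G.ε.app X.A
            rw [Category.assoc, hnat, ← Category.assoc, E.eps_comp] }
      naturality := fun X Y f => by ext; exact G.ε.naturality f.f }
  δ :=
    { app := fun X =>
        { f := G.δ.app X.A
          h := by
            dsimp
            calc (T : A ⥤ A).map (G.δ.app X.A) ≫ E.lam.app ((G : A ⥤ A).obj X.A) ≫
                  (G : A ⥤ A).map (E.lam.app X.A ≫ (G : A ⥤ A).map X.a)
                = (T : A ⥤ A).map (G.δ.app X.A) ≫ E.lam.app ((G : A ⥤ A).obj X.A) ≫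
                    (G : A ⥤ A).map (E.lam.app X.A) ≫
                    (G : A ⥤ A).map ((G : A ⥤ A).map X.a) := by
                  rw [Functor.map_comp]
              _ = (E.lam.app X.A ≫ G.δ.app ((T : A ⥤ A).obj X.A)) ≫
                    (G : A ⥤ A).map ((G : A ⥤ A).map X.a) := by
                  rw [E.delta_comp]; simp [Category.assoc]
              _ = E.lam.app X.A ≫ (G : A ⥤ A).map X.a ≫ G.δ.app X.A := by
                  have hnat : (G : A ⥤ A).map X.a ≫ G.δ.app X.A =
                      G.δ.app ((T : A ⥤ A).obj X.A) ≫
                        (G : A ⥤ A).map ((G : A ⥤ A).map X.a) := by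
                    simpa using (G.δ.naturality X.a).symm
                  rw [hnat, Category.assoc]
              _ = (E.lam.app X.A ≫ (G : A ⥤ A).map X.a) ≫ G.δ.app X.A := by
                  rw [Category.assoc] }
      naturality := fun X Y f => by ext; exact G.δ.naturality f.f }
  coassoc X := by ext; exact G.coassoc X.A
  left_counit X := by ext; exact G.left_counit X.A
  right_counit X := by ext; exact G.right_counit X.A


/-- The value of the lifted monad `T̂` on an object of `A^G`: `T̂(a, θ) = (T(a), λ_a ∘ T(θ))`. -/
@[simps]
def liftCoalgebra (X : G.Coalgebra) : G.Coalgebra where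
  A := (T : A ⥤ A).obj X.A
  a := (T : A ⥤ A).map X.a ≫ E.lam.app X.A
  counit := by
    rw [Category.assoc, E.eps_comp, ← Functor.map_comp, X.counit]
    simp
  coassoc := by
    calc ((T : A ⥤ A).map X.a ≫ E.lam.app X.A) ≫ G.δ.app ((T : A ⥤ A).obj X.A)
        = (T : A ⥤ A).map X.a ≫ (T : A ⥤ A).map (G.δ.app X.A) ≫
            E.lam.app ((G : A ⥤ A).obj X.A) ≫ (G : A ⥤ A).map (E.lam.app X.A) := by
          rw [Category.assoc, E.delta_comp]
      _ = (T : A ⥤ A).map (X.a ≫ G.δ.app X.A) ≫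
            E.lam.app ((G : A ⥤ A).obj X.A) ≫ (G : A ⥤ A).map (E.lam.app X.A) := by
          rw [Functor.map_comp, Category.assoc]
      _ = (T : A ⥤ A).map X.a ≫ (T : A ⥤ A).map ((G : A ⥤ A).map X.a) ≫
            E.lam.app ((G : A ⥤ A).obj X.A) ≫ (G : A ⥤ A).map (E.lam.app X.A) := by
          rw [X.coassoc, Functor.map_comp, Category.assoc]
      _ = (T : A ⥤ A).map X.a ≫ E.lam.app X.A ≫
            (G : A ⥤ A).map ((T : A ⥤ A).map X.a) ≫ (G : A ⥤ A).map (E.lam.app X.A) := by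
          rw [← Category.assoc ((T : A ⥤ A).map ((G : A ⥤ A).map X.a)), E.lam_natural X.a]
          simp only [Category.assoc]
      _ = ((T : A ⥤ A).map X.a ≫ E.lam.app X.A) ≫
            (G : A ⥤ A).map ((T : A ⥤ A).map X.a ≫ E.lam.app X.A) := by
          rw [Functor.map_comp]
          simp only [Category.assoc]


/-- The lifting of the endofunctor `T` to `A^G`. -/
@[simps]
def liftFunctorT : G.Coalgebra ⥤ G.Coalgebra where
  obj X := E.liftCoalgebra X
  map {X Y} f :=
    { f := (T : A ⥤ A).map f.f
      h := by
        try dsimp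
        calc ((T : A ⥤ A).map X.a ≫ E.lam.app X.A) ≫ (G : A ⥤ A).map ((T : A ⥤ A).map f.f)
            = (T : A ⥤ A).map X.a ≫ E.lam.app X.A ≫
                (G : A ⥤ A).map ((T : A ⥤ A).map f.f) := by rw [Category.assoc]
          _ = (T : A ⥤ A).map X.a ≫ (T : A ⥤ A).map ((G : A ⥤ A).map f.f) ≫
                E.lam.app Y.A := by rw [← E.lam_natural f.f]
          _ = (T : A ⥤ A).map (X.a ≫ (G : A ⥤ A).map f.f) ≫ E.lam.app Y.A := by
              rw [Functor.map_comp, Category.assoc]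
          _ = (T : A ⥤ A).map (f.f ≫ Y.a) ≫ E.lam.app Y.A := by rw [f.h]
          _ = (T : A ⥤ A).map f.f ≫ (T : A ⥤ A).map Y.a ≫ E.lam.app Y.A := by
              rw [Functor.map_comp, Category.assoc] }
  map_id X := by ext; exact (T : A ⥤ A).map_id X.A
  map_comp f g := by ext; exact (T : A ⥤ A).map_comp f.f g.f

/-- The unit of the lifted monad. -/
@[simps]
def liftEta : 𝟭 (G.Coalgebra) ⟶ E.liftFunctorT where
  app X :=
    { f := T.η.app X.A
      h := by
        dsimp
        have hnat : X.a ≫ T.η.app ((G : A ⥤ A).obj X.A) =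
            T.η.app X.A ≫ (T : A ⥤ A).map X.a := by
          simpa using T.η.naturality X.a
        show X.a ≫ (G : A ⥤ A).map (T.η.app X.A) =
          T.η.app X.A ≫ (T : A ⥤ A).map X.a ≫ E.lam.app X.A
        rw [← Category.assoc, ← hnat, Category.assoc, E.comp_unit] }
  naturality X Y f := by
    ext
    show f.f ≫ T.η.app Y.A = T.η.app X.A ≫ (T : A ⥤ A).map f.f
    simpa using T.η.naturality f.f

/-- The multiplication of the lifted monad. -/
@[simps]
def liftMu : E.liftFunctorT ⋙ E.liftFunctorT ⟶ E.liftFunctorT where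
  app X :=
    { f := T.μ.app X.A
      h := by
        dsimp
        have hnat : (T : A ⥤ A).map ((T : A ⥤ A).map X.a) ≫
              T.μ.app ((G : A ⥤ A).obj X.A) = T.μ.app X.A ≫ (T : A ⥤ A).map X.a := by
          simpa using T.μ.naturality X.a
        calc ((T : A ⥤ A).map ((T : A ⥤ A).map X.a ≫ E.lam.app X.A) ≫
                E.lam.app ((T : A ⥤ A).obj X.A)) ≫ (G : A ⥤ A).map (T.μ.app X.A)
            = (T : A ⥤ A).map ((T : A ⥤ A).map X.a) ≫
                ((T : A ⥤ A).map (E.lam.app X.A) ≫ E.lam.app ((T : A ⥤ A).obj X.A) ≫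
                  (G : A ⥤ A).map (T.μ.app X.A)) := by
              rw [Functor.map_comp]
              simp only [Category.assoc]
          _ = (T : A ⥤ A).map ((T : A ⥤ A).map X.a) ≫
                T.μ.app ((G : A ⥤ A).obj X.A) ≫ E.lam.app X.A := by
              rw [← E.comp_mul]
          _ = (T.μ.app X.A ≫ (T : A ⥤ A).map X.a) ≫ E.lam.app X.A := by
              rw [← Category.assoc, hnat]
          _ = T.μ.app X.A ≫ (T : A ⥤ A).map X.a ≫ E.lam.app X.A := by
              rw [Category.assoc] }
  naturality X Y f := by
    ext
    show (T : A ⥤ A).map ((T : A ⥤ A).map f.f) ≫ T.μ.app Y.A =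
      T.μ.app X.A ≫ (T : A ⥤ A).map f.f
    simpa using T.μ.naturality f.f

/-- The lifting `T̂` of the monad `T` to the Eilenberg–Moore category `A^G`
along the entwining `λ`. -/
def liftedMonad : Monad (G.Coalgebra) where
  toFunctor := E.liftFunctorT
  η := E.liftEta
  μ := E.liftMu
  assoc X := by ext; exact T.assoc X.A
  left_unit X := by ext; exact T.left_unit X.A
  right_unit X := by ext; exact T.right_unit X.A


end Entwining


namespace Entwining

variable {A : Type*} [Category A] {F : Monad A} {G : Comonad A} (E : Entwining F G)

/-- The canonical natural transformation assembling the structure morphisms of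
coalgebras over a comonad. -/
@[simps]
def coalgStructNat {C : Type*} [Category C] (H : Comonad C) :
    H.forget ⟶ H.forget ⋙ (H : C ⥤ C) where
  app X := X.a
  naturality X Y f := by exact f.h.symm

/-- The left `Ĝ`-comodule structure `β_{K'} : φ_F ⟶ Ĝφ_F` on the free functor `φ_F`
corresponding to a functor `K' : A ⥤ (A_F)^{Ĝ}` with `U^{Ĝ} ∘ K' = φ_F`. -/
def structOfK (K' : A ⥤ E.liftedComonad.Coalgebra)
    (hK' : K' ⋙ Comonad.forget E.liftedComonad = F.free) :
    F.free ⟶ F.free ⋙ (E.liftedComonad : F.Algebra ⥤ F.Algebra) :=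
  eqToHom hK'.symm ≫ Functor.whiskerLeft K' (coalgStructNat E.liftedComonad) ≫
    Functor.whiskerRight (eqToHom hK') (E.liftedComonad : F.Algebra ⥤ F.Algebra)

/-- The underlying left `G`-comodule structure `β = U_F(β_{K'}) : F ⟶ GF` on the
functor `F` induced by a functor `K'` as above. -/
def inducedComod (K' : A ⥤ E.liftedComonad.Coalgebra)
    (hK' : K' ⋙ Comonad.forget E.liftedComonad = F.free) :
    (F : A ⥤ A) ⟶ (F : A ⥤ A) ⋙ (G : A ⥤ A) :=
  Functor.whiskerRight (E.structOfK K' hK') F.forget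


/-- The right `Ĝ`-comodule structure `α : U_F ⟶ U_F Ĝ` on the forgetful functor
corresponding to the functor `K'`; its component at `(a, h_a)` is the morphism
`α_{(a,h_a)} : a ⟶ G(a)`. -/
def comodOnForget (K' : A ⥤ E.liftedComonad.Coalgebra)
    (hK' : K' ⋙ Comonad.forget E.liftedComonad = F.free) :
    F.forget ⟶ (E.liftedComonad : F.Algebra ⥤ F.Algebra) ⋙ F.forget :=
  Functor.whiskerLeft F.forget F.adj.unit ≫
    Functor.whiskerRight (Functor.whiskerLeft F.forget (E.structOfK K' hK')) F.forget ≫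
      Functor.whiskerRight (Functor.whiskerRight F.adj.counit
        (E.liftedComonad : F.Algebra ⥤ F.Algebra)) F.forget

end Entwining

section CoalgebraTransfer

variable {C : Type*} [Category C]

/-- The functor on Eilenberg–Moore coalgebra categories induced by a comonad morphism. -/
@[simps]
def coalgF {M N : Comonad C} (h : M ⟶ N) : M.Coalgebra ⥤ N.Coalgebra where
  obj X :=
    { A := X.A
      a := X.a ≫ h.app X.A
      counit := by rw [Category.assoc, h.app_ε, X.counit]
      coassoc := by
        rw [Category.assoc, h.app_δ, ← Category.assoc X.a, X.coassoc, Category.assoc,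
          ← Category.assoc (M.map X.a), h.naturality, Functor.map_comp]
        simp only [Category.assoc] }
  map {X Y} f :=
    { f := f.f
      h := by
        show (X.a ≫ h.app X.A) ≫ N.map f.f = f.f ≫ Y.a ≫ h.app Y.A
        rw [Category.assoc, ← h.naturality, ← Category.assoc X.a, f.h]
        simp only [Category.assoc] }
  map_id X := rfl
  map_comp f g := rfl

/-- The identity comonad morphism induces the identity functor. -/
@[simps!]
def coalgFId {M : Comonad C} : coalgF (𝟙 M) ≅ 𝟭 M.Coalgebra :=
  NatIso.ofComponents (fun X => Comonad.Coalgebra.isoMk (Iso.refl _) (by simp [coalgF])) (by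
    intro X Y f; ext; simp [coalgF])

/-- Compatibility of `coalgF` with composition. -/
@[simps!]
def coalgFComp {M N P : Comonad C} (f : M ⟶ N) (g : N ⟶ P) :
    coalgF (f ≫ g) ≅ coalgF f ⋙ coalgF g :=
  NatIso.ofComponents (fun X => Comonad.Coalgebra.isoMk (Iso.refl _) (by simp [coalgF])) (by
    intro X Y f; ext; exact (Category.comp_id _).trans (Category.id_comp _).symm)

/-- `coalgF` respects equality of comonad morphisms. -/
@[simps!]
def coalgFEq {M N : Comonad C} {f g : M ⟶ N} (h : f = g) : coalgF f ≅ coalgF g :=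
  NatIso.ofComponents (fun X => Comonad.Coalgebra.isoMk (Iso.refl _) (by subst h; simp [coalgF])) (by
    intro X Y φ; ext; simp [coalgF])

/-- An isomorphism of comonads induces an equivalence of coalgebra categories. -/
def coalgEquiv {M N : Comonad C} (h : M ≅ N) : M.Coalgebra ≌ N.Coalgebra where
  functor := coalgF h.hom
  inverse := coalgF h.inv
  unitIso := coalgFId.symm ≪≫ coalgFEq h.hom_inv_id.symm ≪≫ coalgFComp _ _
  counitIso := (coalgFComp _ _).symm ≪≫ coalgFEq h.inv_hom_id ≪≫ coalgFId
  functor_unitIso_comp := by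
    intro X; ext
    show (𝟙 X.A ≫ 𝟙 X.A ≫ 𝟙 X.A) ≫ 𝟙 X.A ≫ 𝟙 X.A ≫ 𝟙 X.A = 𝟙 X.A
    simp

/-- Morphisms into a cofree coalgebra are determined by their adjuncts. -/
lemma cofree_hom_ext {N : Comonad C} {c : N.Coalgebra} {x : C}
    (g₁ g₂ : c ⟶ N.cofree.obj x) (w : g₁.f ≫ N.ε.app x = g₂.f ≫ N.ε.app x) : g₁ = g₂ := by
  have key : ∀ g : c ⟶ N.cofree.obj x, c.a ≫ (N : C ⥤ C).map (g.f ≫ N.ε.app x) = g.f := by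
    intro g
    have hg : c.a ≫ N.map g.f = g.f ≫ N.δ.app x := g.h
    have h1 : c.a ≫ N.map (g.f ≫ N.ε.app x) = (c.a ≫ N.map g.f) ≫ N.map (N.ε.app x) :=
      (congrArg (c.a ≫ ·) (N.map_comp g.f (N.ε.app x))).trans (Category.assoc _ _ _).symm
    exact h1.trans ((congrArg (· ≫ N.map (N.ε.app x)) hg).trans ((Category.assoc _ _ _).trans
      ((congrArg (g.f ≫ ·) (N.right_counit x)).trans (Category.comp_id _))))
  ext
  rw [← key g₁, w, key g₂]

/-- The comonad morphism between the comonads induced by two adjunctions with the same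
left adjoint. -/
def toComonadHomOfSameLeftAdjoint {D : Type*} [Category D] {L : C ⥤ D} {R R' : D ⥤ C}
    (adj1 : L ⊣ R) (adj2 : L ⊣ R') : adj1.toComonad ⟶ adj2.toComonad where
  app X := L.map ((Adjunction.rightAdjointUniq adj1 adj2).hom.app X)
  naturality X Y f := by
    show L.map (R.map f) ≫ _ = _ ≫ L.map (R'.map f)
    rw [← Functor.map_comp, ← Functor.map_comp,
      (Adjunction.rightAdjointUniq adj1 adj2).hom.naturality f]
  app_ε X := Adjunction.rightAdjointUniq_hom_app_counit adj1 adj2 X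
  app_δ X := by
    dsimp [Adjunction.toComonad]
    rw [← Functor.map_comp, ← Functor.map_comp, ← Functor.map_comp]
    congr 1
    rw [← Category.assoc, Adjunction.unit_rightAdjointUniq_hom_app adj1 adj2 (R.obj X)]
    simpa using adj2.unit.naturality ((Adjunction.rightAdjointUniq adj1 adj2).hom.app X)

instance {D : Type*} [Category D] {L : C ⥤ D} {R R' : D ⥤ C}
    (adj1 : L ⊣ R) (adj2 : L ⊣ R') (X : D) :
    IsIso ((toComonadHomOfSameLeftAdjoint adj1 adj2).app X) := by
  exact (inferInstance : IsIso (L.map ((Adjunction.rightAdjointUniq adj1 adj2).hom.app X)))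

/-- The comparison functors of two adjunctions with the same left adjoint agree up to
the transfer functor along `toComonadHomOfSameLeftAdjoint`. -/
def comparisonCompCoalgF {D : Type*} [Category D] {L : C ⥤ D} {R R' : D ⥤ C}
    (adj1 : L ⊣ R) (adj2 : L ⊣ R') :
    Comonad.comparison adj1 ⋙ coalgF (toComonadHomOfSameLeftAdjoint adj1 adj2) ≅
      Comonad.comparison adj2 :=
  NatIso.ofComponents
    (fun X => Comonad.Coalgebra.isoMk (Iso.refl _) (by
      dsimp [toComonadHomOfSameLeftAdjoint, coalgF, Comonad.comparison]
      simp only [CategoryTheory.Functor.map_id, Category.comp_id, Category.id_comp, ← Functor.map_comp]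
      exact (L.map_comp _ _).symm.trans ((congrArg L.map
        (Adjunction.unit_rightAdjointUniq_hom_app adj1 adj2 X)).trans (Category.id_comp _).symm)))
    (by intro X Y f; ext; exact (Category.comp_id _).trans (Category.id_comp _).symm)

lemma ofNatIsoLeft_counit_app {D : Type*} [Category D] {F F' : C ⥤ D} {H : D ⥤ C}
    (adj : F ⊣ H) (iso : F ≅ F') (X : D) :
    (adj.ofNatIsoLeft iso).counit.app X = iso.inv.app (H.obj X) ≫ adj.counit.app X := by
  simp [Adjunction.ofNatIsoLeft, Adjunction.mkOfHomEquiv, Adjunction.homEquiv_counit]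

end CoalgebraTransfer

section Main

variable {A : Type*} [Category A] {T : Monad A} {G : Comonad A} (E : Entwining T G)
  (K' : A ⥤ E.liftedComonad.Coalgebra)
  (hK' : K' ⋙ Comonad.forget E.liftedComonad = T.free)

lemma e_comp_e' (a : A) :
    (eqToHom hK').app a ≫ (eqToHom hK'.symm).app a = 𝟙 _ := by
  rw [← NatTrans.comp_app, eqToHom_trans, eqToHom_refl, NatTrans.id_app]

lemma e'_comp_e (a : A) :
    (eqToHom hK'.symm).app a ≫ (eqToHom hK').app a = 𝟙 _ := by
  rw [← NatTrans.comp_app, eqToHom_trans, eqToHom_refl, NatTrans.id_app]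

instance e_isIso (a : A) : IsIso ((eqToHom hK').app a) :=
  ⟨(eqToHom hK'.symm).app a, e_comp_e' E K' hK' a, e'_comp_e E K' hK' a⟩

lemma structOfK_app (a : A) :
    (E.structOfK K' hK').app a =
      (eqToHom hK'.symm).app a ≫ (K'.obj a).a ≫
        (E.liftedComonad : T.Algebra ⥤ T.Algebra).map ((eqToHom hK').app a) :=
  rfl

lemma e_structOfK (a : A) :
    (eqToHom hK').app a ≫ (E.structOfK K' hK').app a =
      (K'.obj a).a ≫ (E.liftedComonad : T.Algebra ⥤ T.Algebra).map ((eqToHom hK').app a) := by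
  rw [structOfK_app, ← Category.assoc, e_comp_e', Category.id_comp]
  rfl

lemma structOfK_counit (a : A) :
    (E.structOfK K' hK').app a ≫ E.liftedComonad.ε.app (T.free.obj a) = 𝟙 _ := by
  have hc : (K'.obj a).a ≫
      E.liftedComonad.ε.app ((K' ⋙ Comonad.forget E.liftedComonad).obj a) = 𝟙 _ :=
    (K'.obj a).counit
  erw [structOfK_app, Category.assoc, Category.assoc,
    E.liftedComonad.ε.naturality ((eqToHom hK').app a), Functor.id_map,
    ← Category.assoc ((K'.obj a).a), hc, Category.id_comp]
  exact e'_comp_e E K' hK' a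

lemma structOfK_coassoc (a : A) :
    (E.structOfK K' hK').app a ≫ E.liftedComonad.δ.app (T.free.obj a) =
      (E.structOfK K' hK').app a ≫
        (E.liftedComonad : T.Algebra ⥤ T.Algebra).map ((E.structOfK K' hK').app a) := by
  rw [structOfK_app]
  simp only [Category.assoc]
  erw [Category.assoc, E.liftedComonad.δ.naturality ((eqToHom hK').app a)]
  have hc : (K'.obj a).a ≫
      E.liftedComonad.δ.app ((K' ⋙ Comonad.forget E.liftedComonad).obj a) =
      (K'.obj a).a ≫
        (E.liftedComonad : T.Algebra ⥤ T.Algebra).map (K'.obj a).a :=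
    (K'.obj a).coassoc
  simp only [Functor.comp_map, Functor.map_comp]
  erw [← Category.assoc ((K'.obj a).a), hc]
  congr 1
  have hmap : (E.liftedComonad : T.Algebra ⥤ T.Algebra).map ((eqToHom hK').app a) ≫
      (E.liftedComonad : T.Algebra ⥤ T.Algebra).map ((eqToHom hK'.symm).app a) = 𝟙 _ := by
    rw [← Functor.map_comp, e_comp_e' E K' hK' a, CategoryTheory.Functor.map_id]
  exact (((Category.assoc _ _ _).trans (congrArg (_ ≫ ·) ((Category.assoc _ _ _).symm.trans
    ((congrArg (· ≫ _) hmap).trans ((Category.id_comp _).trans (Functor.map_comp _ _ _)))))).trans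
      (Category.assoc _ _ _).symm).symm

/-- The component at `X` of the canonical comonad morphism from the comonad generated by
the Eilenberg–Moore adjunction to the lifted comonad. -/
def tApp (X : T.Algebra) : T.adj.toComonad.obj X ⟶ E.liftedComonad.obj X :=
  (E.structOfK K' hK').app X.A ≫
    (E.liftedComonad : T.Algebra ⥤ T.Algebra).map (T.adj.counit.app X)

lemma tApp_eps (X : T.Algebra) :
    tApp E K' hK' X ≫ E.liftedComonad.ε.app X = T.adj.counit.app X := by
  have hnat : (E.liftedComonad : T.Algebra ⥤ T.Algebra).map (T.adj.counit.app X) ≫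
      E.liftedComonad.ε.app X =
      E.liftedComonad.ε.app (T.adj.toComonad.obj X) ≫ T.adj.counit.app X := by
    exact E.liftedComonad.ε.naturality (T.adj.counit.app X)
  have hc : (E.structOfK K' hK').app X.A ≫
      E.liftedComonad.ε.app (T.adj.toComonad.obj X) = 𝟙 _ :=
    structOfK_counit E K' hK' X.A
  erw [tApp, Category.assoc, hnat, ← Category.assoc, hc]
  exact Category.id_comp _

lemma tApp_coassoc (X : T.Algebra) :
    tApp E K' hK' X ≫ E.liftedComonad.δ.app X =
      (E.structOfK K' hK').app X.A ≫
        (E.liftedComonad : T.Algebra ⥤ T.Algebra).map (tApp E K' hK' X) := by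
  have hnat : (E.liftedComonad : T.Algebra ⥤ T.Algebra).map (T.adj.counit.app X) ≫
      E.liftedComonad.δ.app X =
      E.liftedComonad.δ.app (T.adj.toComonad.obj X) ≫
        (E.liftedComonad : T.Algebra ⥤ T.Algebra).map
          ((E.liftedComonad : T.Algebra ⥤ T.Algebra).map (T.adj.counit.app X)) :=
    E.liftedComonad.δ.naturality (T.adj.counit.app X)
  have hsc : (E.structOfK K' hK').app X.A ≫
      E.liftedComonad.δ.app (T.adj.toComonad.obj X) =
      (E.structOfK K' hK').app X.A ≫
        (E.liftedComonad : T.Algebra ⥤ T.Algebra).map ((E.structOfK K' hK').app X.A) :=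
    structOfK_coassoc E K' hK' X.A
  rw [tApp]
  erw [Category.assoc, hnat, ← Category.assoc, hsc, Category.assoc]
  exact congrArg (_ ≫ ·) (CategoryTheory.Functor.map_comp _ _ _).symm

lemma comparison_tApp (a : A) :
    T.free.map (T.adj.unit.app a) ≫ tApp E K' hK' (T.free.obj a) =
      (E.structOfK K' hK').app a := by
  have hnat : T.free.map (T.adj.unit.app a) ≫
      (E.structOfK K' hK').app ((T.free.obj a).A) =
      (E.structOfK K' hK').app a ≫
        (E.liftedComonad : T.Algebra ⥤ T.Algebra).map (T.free.map (T.adj.unit.app a)) :=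
    (E.structOfK K' hK').naturality (T.adj.unit.app a)
  erw [tApp, ← Category.assoc, hnat, Category.assoc, ← Functor.map_comp]
  have htri : T.free.map (T.adj.unit.app a) ≫ T.adj.counit.app (T.free.obj a) =
      𝟙 (T.free.obj a) :=
    T.adj.left_triangle_components a
  rw [htri, CategoryTheory.Functor.map_id]
  exact Category.comp_id _

/-- The canonical comonad morphism `T.adj.toComonad ⟶ Ĝ` associated to `K'`. -/
def tHom : T.adj.toComonad ⟶ E.liftedComonad where
  app X := tApp E K' hK' X
  naturality X Y f := by
    dsimp [Adjunction.toComonad]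
    rw [tApp, tApp]
    have hnat : T.free.map f.f ≫ (E.structOfK K' hK').app Y.A =
        (E.structOfK K' hK').app X.A ≫
          (E.liftedComonad : T.Algebra ⥤ T.Algebra).map (T.free.map f.f) :=
      (E.structOfK K' hK').naturality f.f
    have hc : T.free.map f.f ≫ T.adj.counit.app Y = T.adj.counit.app X ≫ f :=
      T.adj.counit.naturality f
    exact (Category.assoc _ _ _).symm.trans ((congrArg (· ≫ _) hnat).trans
      ((Category.assoc _ _ _).trans ((congrArg (_ ≫ ·)
        ((CategoryTheory.Functor.map_comp _ _ _).symm.trans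
          ((congrArg (E.liftedComonad : T.Algebra ⥤ T.Algebra).map hc).trans
            (CategoryTheory.Functor.map_comp _ _ _)))).trans (Category.assoc _ _ _).symm)))
  app_ε X := tApp_eps E K' hK' X
  app_δ X := by
    rw [tApp_coassoc, ← Category.assoc]
    congr 1
    exact (comparison_tApp E K' hK' X.A).symm

lemma comodOnForget_app (X : T.Algebra) :
    (E.comodOnForget K' hK').app X =
      T.η.app X.A ≫ ((E.structOfK K' hK').app X.A).f ≫ (G : A ⥤ A).map X.a := by
  simp [Entwining.comodOnForget, Monad.adj]
  erw [Category.comp_id, Category.comp_id, Category.id_comp]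
  rfl

lemma tApp_f (X : T.Algebra) :
    (T : A ⥤ A).map ((E.comodOnForget K' hK').app X) ≫
        E.lam.app X.A ≫ (G : A ⥤ A).map X.a = (tApp E K' hK' X).f := by
  have hb := ((E.structOfK K' hK').app X.A).h
  dsimp at hb
  have hend : (tApp E K' hK' X).f =
      ((E.structOfK K' hK').app X.A).f ≫ (G : A ⥤ A).map X.a := by
    exact congrArg (((E.structOfK K' hK').app X.A).f ≫ ·)
      (congrArg (G : A ⥤ A).map ((congrArg (· ≫ X.a) (T.map_id X.A)).trans (Category.id_comp X.a)))
  rw [hend, comodOnForget_app]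
  set b := ((E.structOfK K' hK').app X.A).f with hbdef
  calc (T : A ⥤ A).map (T.η.app X.A ≫ b ≫ (G : A ⥤ A).map X.a) ≫
        E.lam.app X.A ≫ (G : A ⥤ A).map X.a
      = (T : A ⥤ A).map (T.η.app X.A) ≫ (T : A ⥤ A).map b ≫
          ((T : A ⥤ A).map ((G : A ⥤ A).map X.a) ≫ E.lam.app X.A) ≫
          (G : A ⥤ A).map X.a := by
        simp only [Functor.map_comp, Category.assoc]
        erw [Functor.map_comp, Category.assoc]
    _ = (T : A ⥤ A).map (T.η.app X.A) ≫ (T : A ⥤ A).map b ≫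
          E.lam.app ((T : A ⥤ A).obj X.A) ≫
          (G : A ⥤ A).map ((T : A ⥤ A).map X.a) ≫ (G : A ⥤ A).map X.a := by
        erw [E.lam_natural X.a]
        erw [Category.assoc]
    _ = (T : A ⥤ A).map (T.η.app X.A) ≫ (T : A ⥤ A).map b ≫
          E.lam.app ((T : A ⥤ A).obj X.A) ≫
          (G : A ⥤ A).map (T.μ.app X.A) ≫ (G : A ⥤ A).map X.a := by
        rw [← Functor.map_comp, ← X.assoc, Functor.map_comp]
    _ = (T : A ⥤ A).map (T.η.app X.A) ≫ (T.μ.app X.A ≫ b) ≫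
          (G : A ⥤ A).map X.a := by
        exact congrArg (_ ≫ ·) (((congrArg (_ ≫ ·) (Category.assoc _ _ _).symm).trans
          (Category.assoc _ _ _).symm).trans (congrArg (· ≫ (G : A ⥤ A).map X.a) hb))
    _ = (b ≫ (G : A ⥤ A).map X.a : (T : A ⥤ A).obj X.A ⟶ (G : A ⥤ A).obj X.A) := by
        erw [← Category.assoc, ← Category.assoc, T.right_unit X.A, Category.id_comp]

/-- `K'` is isomorphic to the comparison functor followed by the transfer functor. -/
noncomputable def psi : K' ≅ Comonad.comparison T.adj ⋙ coalgF (tHom E K' hK') :=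
  NatIso.ofComponents
    (fun a => Comonad.Coalgebra.isoMk (@asIso _ _ _ _ ((eqToHom hK').app a) (e_isIso E K' hK' a)) (by
      show (K'.obj a).a ≫ (E.liftedComonad : T.Algebra ⥤ T.Algebra).map ((eqToHom hK').app a) =
        (eqToHom hK').app a ≫ (T.free.map (T.adj.unit.app a) ≫ tApp E K' hK' (T.free.obj a))
      rw [comparison_tApp E K' hK' a, e_structOfK E K' hK' a]))
    (by
      intro a b f
      ext
      exact congrArg Monad.Algebra.Hom.f ((eqToHom hK').naturality f))

/-- The canonical morphism to the cofree coalgebra. -/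
def kappa (X : T.Algebra) : K'.obj X.A ⟶ E.liftedComonad.cofree.obj X where
  f := (eqToHom hK').app X.A ≫ tApp E K' hK' X
  h := by
    show (K'.obj X.A).a ≫ (E.liftedComonad : T.Algebra ⥤ T.Algebra).map
      ((eqToHom hK').app X.A ≫ tApp E K' hK' X) =
      ((eqToHom hK').app X.A ≫ tApp E K' hK' X) ≫ E.liftedComonad.δ.app X
    exact (congrArg (_ ≫ ·) (Functor.map_comp _ _ _)).trans ((Category.assoc _ _ _).symm.trans
      ((congrArg (· ≫ _) (e_structOfK E K' hK' X.A).symm).trans ((Category.assoc _ _ _).trans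
        ((congrArg (_ ≫ ·) (tApp_coassoc E K' hK' X).symm).trans (Category.assoc _ _ _).symm))))

end Main

lemma comonadHom_isIso_of_isIso_app {C : Type*} [Category C] {M N : Comonad C} (h : M ⟶ N)
    (hyp : ∀ X, IsIso (h.app X)) : IsIso h := by
  have h1 : IsIso ((comonadToFunctor C).map h) :=
    @NatIso.isIso_of_isIso_app _ _ _ _ _ _ h.toNatTrans hyp
  have h2 : IsIso ((comonadToFunctor C).map h) := h1
  exact isIso_of_reflects_iso h (comonadToFunctor C)

section Main2

variable {A : Type*} [Category A] {T : Monad A} {G : Comonad A} (E : Entwining T G)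
  (K' : A ⥤ E.liftedComonad.Coalgebra)
  (hK' : K' ⋙ Comonad.forget E.liftedComonad = T.free)

lemma forward_isIso_tApp (hE : K'.IsEquivalence) (X : T.Algebra) :
    IsIso (tApp E K' hK' X) := by
  letI := hE
  let eqv := K'.asEquivalence
  let adjK := eqv.toAdjunction
  let adj2 := adjK.comp E.liftedComonad.adj
  let adj2' := adj2.ofNatIsoLeft (eqToIso hK')
  let σ := Adjunction.rightAdjointUniq T.adj adj2'
  have hcounit : IsIso (adjK.counit.app (E.liftedComonad.cofree.obj X)) := by
    show IsIso (eqv.counitIso.hom.app _)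
    infer_instance
  have hk : kappa E K' hK' X =
      K'.map (σ.hom.app X) ≫ adjK.counit.app (E.liftedComonad.cofree.obj X) := by
    apply cofree_hom_ext
    have lhs : (kappa E K' hK' X).f ≫ E.liftedComonad.ε.app X =
        (eqToHom hK').app X.A ≫ T.adj.counit.app X := by
      show ((eqToHom hK').app X.A ≫ tApp E K' hK' X) ≫ E.liftedComonad.ε.app X = _
      erw [Category.assoc, tApp_eps]
    rw [lhs]
    -- now the right hand side
    have hnat : (K' ⋙ Comonad.forget E.liftedComonad).map (σ.hom.app X) ≫
        (eqToHom hK').app ((E.liftedComonad.cofree ⋙ eqv.inverse).obj X) =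
        (eqToHom hK').app X.A ≫ T.free.map (σ.hom.app X) :=
      (eqToHom hK').naturality (σ.hom.app X)
    have hZ : (K'.map (σ.hom.app X)).f =
        (eqToHom hK').app X.A ≫ T.free.map (σ.hom.app X) ≫
          (eqToHom hK'.symm).app ((E.liftedComonad.cofree ⋙ eqv.inverse).obj X) := by
      erw [← Category.assoc, ← hnat, Category.assoc, e_comp_e' E K' hK', Category.comp_id]
      rfl
    have hcomp : (adjK.counit.app (E.liftedComonad.cofree.obj X)).f ≫
        E.liftedComonad.ε.app X = adj2.counit.app X := by
      rw [Adjunction.comp_counit_app]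
      congr 1
      simp [Comonad.adj]
      exact (Category.id_comp _).symm
    have hcounit2 : (eqToHom hK'.symm).app ((E.liftedComonad.cofree ⋙ eqv.inverse).obj X) ≫
        adj2.counit.app X = adj2'.counit.app X := by
      rw [ofNatIsoLeft_counit_app adj2 (eqToIso hK') X]
      congr 1
    have hfin : T.free.map (σ.hom.app X) ≫ adj2'.counit.app X = T.adj.counit.app X :=
      Adjunction.rightAdjointUniq_hom_app_counit T.adj adj2' X
    have rhs : (K'.map (σ.hom.app X) ≫
        adjK.counit.app (E.liftedComonad.cofree.obj X)).f ≫ E.liftedComonad.ε.app X =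
        (eqToHom hK').app X.A ≫ T.adj.counit.app X := by
      erw [Comonad.Coalgebra.comp_f, Category.assoc, hcomp, hZ]
      erw [Category.assoc, Category.assoc, hcounit2, hfin]
      rfl
    erw [rhs]
  have hkiso : IsIso (kappa E K' hK' X) := by
    rw [hk]
    have : IsIso (K'.map (σ.hom.app X)) := by
      haveI : IsIso (σ.hom.app X) := Iso.isIso_hom (σ.app X)
      exact Functor.map_isIso K' _
    exact IsIso.comp_isIso' this hcounit
  have hkf : IsIso ((kappa E K' hK' X).f) :=
    (inferInstance : IsIso (E.liftedComonad.forget.map (kappa E K' hK' X)))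
  have : IsIso ((eqToHom hK').app X.A ≫ tApp E K' hK' X) := hkf
  exact IsIso.of_isIso_comp_left ((eqToHom hK').app X.A) (tApp E K' hK' X)

end Main2

open Entwining in
/-- **Theorem 2.3.**  Let `λ : TG ⟶ GT` be an entwining from a monad `T` to a comonad
`G` on `A`, `Ĝ` the lifting of `G` to `A_T`, and `K' : A ⥤ (A_T)^{Ĝ}` a functor with
`U^{Ĝ} ∘ K' = φ_T`, with corresponding right `Ĝ`-comodule structure on `U_T` having
components `α_{(a,h_a)} : a ⟶ G(a)`.  Then `K'` is an equivalence of categories if and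
only if the composite `G(h_a) ∘ λ_a ∘ T(α_{(a,h_a)})` is an isomorphism for every
`(a, h_a) ∈ A_T` and the free functor `φ_T` is comonadic. -/
theorem statement8 {A : Type*} [Category A] (T : Monad A) (G : Comonad A)
    (E : Entwining T G) (K' : A ⥤ E.liftedComonad.Coalgebra)
    (hK' : K' ⋙ Comonad.forget E.liftedComonad = T.free) :
    K'.IsEquivalence ↔
      ((∀ X : T.Algebra,
          IsIso ((T : A ⥤ A).map ((E.comodOnForget K' hK').app X) ≫
            E.lam.app X.A ≫ (G : A ⥤ A).map X.a)) ∧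
        Nonempty (ComonadicLeftAdjoint T.free)) := by
  constructor
  · intro hE
    have h1 : ∀ X : T.Algebra, IsIso (tApp E K' hK' X) :=
      forward_isIso_tApp E K' hK' hE
    constructor
    · intro X
      rw [tApp_f E K' hK' X]
      exact (inferInstance : IsIso (T.forget.map (tApp E K' hK' X)))
    · -- comonadicity of the free functor
      have hIso : IsIso (tHom E K' hK') :=
        comonadHom_isIso_of_isIso_app _ h1
      let Φ := coalgEquiv (asIso (tHom E K' hK'))
      have hiso1 : Comonad.comparison T.adj ≅ K' ⋙ Φ.inverse :=
        (Functor.rightUnitor _).symm ≪≫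
          Functor.isoWhiskerLeft (Comonad.comparison T.adj) Φ.unitIso ≪≫
          (Functor.associator _ _ _).symm ≪≫
          Functor.isoWhiskerRight (psi E K' hK').symm Φ.inverse
      haveI := hE
      haveI : (K' ⋙ Φ.inverse).IsEquivalence := inferInstance
      exact ⟨⟨T.forget, T.adj, Functor.isEquivalence_of_iso hiso1.symm⟩⟩
  · rintro ⟨h1, ⟨inst⟩⟩
    letI := inst
    let adj2 := comonadicAdjunction T.free
    haveI h2 : (Comonad.comparison adj2).IsEquivalence := ComonadicLeftAdjoint.eqv
    let u := toComonadHomOfSameLeftAdjoint T.adj adj2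
    have hu : IsIso u :=
      comonadHom_isIso_of_isIso_app _ (fun X => inferInstance)
    let Φu := coalgEquiv (asIso u)
    have hiso1 : Comonad.comparison T.adj ≅ Comonad.comparison adj2 ⋙ Φu.inverse :=
      (Functor.rightUnitor _).symm ≪≫
        Functor.isoWhiskerLeft (Comonad.comparison T.adj) Φu.unitIso ≪≫
        (Functor.associator _ _ _).symm ≪≫
        Functor.isoWhiskerRight (comparisonCompCoalgF T.adj adj2) Φu.inverse
    haveI : (Comonad.comparison T.adj).IsEquivalence :=
      Functor.isEquivalence_of_iso hiso1.symm
    have h1' : ∀ X : T.Algebra, IsIso ((tApp E K' hK' X).f) := by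
      intro X
      rw [← tApp_f E K' hK' X]
      exact h1 X
    have h1'' : ∀ X : T.Algebra, IsIso (tApp E K' hK' X) := by
      intro X
      letI := h1' X
      exact Monad.algebra_iso_of_iso T (tApp E K' hK' X)
    have hIso : IsIso (tHom E K' hK') :=
      comonadHom_isIso_of_isIso_app _ h1''
    haveI : (coalgF (tHom E K' hK')).IsEquivalence :=
      (coalgEquiv (asIso (tHom E K' hK'))).isEquivalence_functor
    haveI : (Comonad.comparison T.adj ⋙ coalgF (tHom E K' hK')).IsEquivalence :=
      inferInstance
    exact Functor.isEquivalence_of_iso (psi E K' hK').symm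

end Paper
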